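/- For all reals a₁, b₁, a₂, b₂ and all integers x, z, the series ∑_{y∈ℤ} T_{a₁,b₁}(x,y) · T_{a₂,b₂}(y,z) converges absolutely, and its sum equals T_{a₁+a₂, b₁+b₂}(x,z). -/

import Mathlib

open Complex MeasureTheory
open scoped Real

/-- `T_{a,b}(x,y) = (1/(2πi)) ∮_{|w|=r} w^{x−y−1} e^{a/w + bw} dw`, the free
one-step transition operator of PushASEP. -/
noncomputable def T (a b : ℝ) (x y : ℤ) (r : ℝ) : ℂ :=
  (2 * (Real.pi : ℂ) * Complex.I)⁻¹ *
    ∮ w in C(0, r), w ^ (x - y - 1) * Complex.exp ((a : ℂ) / w + (b : ℂ) * w)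

namespace Stmt14Aux

noncomputable def coef (a b : ℝ) (p : ℕ × ℕ) : ℂ :=
  (a : ℂ) ^ p.1 * (b : ℂ) ^ p.2 / ((p.1.factorial : ℂ) * (p.2.factorial : ℂ))

noncomputable def E (a b : ℝ) (n : ℤ) : ℂ :=
  ∑' p : ℕ × ℕ, if ((p.2 : ℤ) - (p.1 : ℤ) = n) then coef a b p else 0

lemma norm_coef (a b : ℝ) (p : ℕ × ℕ) :
    ‖coef a b p‖ = (|a| ^ p.1 / p.1.factorial) * (|b| ^ p.2 / p.2.factorial) := by
  simp only [coef, norm_div, norm_mul, norm_pow, Complex.norm_real, Real.norm_eq_abs,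
    Complex.norm_natCast]
  ring

lemma summable_norm_coef (a b : ℝ) : Summable fun p : ℕ × ℕ => ‖coef a b p‖ := by
  have h := (Real.summable_pow_div_factorial |a|).mul_of_nonneg
    (Real.summable_pow_div_factorial |b|) (fun n => by positivity) (fun n => by positivity)
  exact h.congr fun p => (norm_coef a b p).symm

lemma summable_norm_coef_zpow (a b : ℝ) {r : ℝ} (hr : 0 < r) (t : ℤ) :
    Summable fun p : ℕ × ℕ => ‖coef a b p‖ * r ^ (t + (p.2 : ℤ) - (p.1 : ℤ)) := by
  have h := ((Real.summable_pow_div_factorial (|a| / r)).mul_of_nonneg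
    (Real.summable_pow_div_factorial (|b| * r)) (fun n => by positivity)
    (fun n => by positivity)).mul_left (r ^ t)
  refine h.congr fun p => ?_
  rw [norm_coef]
  have hrne : r ≠ 0 := hr.ne'
  rw [show t + (p.2 : ℤ) - (p.1 : ℤ) = t + ((p.2 : ℤ) - (p.1 : ℤ)) by ring,
    zpow_add₀ hrne, zpow_sub₀ hrne, zpow_natCast, zpow_natCast]
  have h1 : (p.1.factorial : ℝ) ≠ 0 := Nat.cast_ne_zero.mpr p.1.factorial_ne_zero
  have h2 : (p.2.factorial : ℝ) ≠ 0 := Nat.cast_ne_zero.mpr p.2.factorial_ne_zero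
  field_simp
  have hri : r ^ p.1 * r⁻¹ ^ p.1 = 1 := by rw [← mul_pow, mul_inv_cancel₀ hrne, one_pow]
  linear_combination (|a| ^ p.1 * r ^ p.2 * |b| ^ p.2) * hri

lemma cexp_eq_tsum (w : ℂ) : Complex.exp w = ∑' n : ℕ, w ^ n / n.factorial := by
  rw [Complex.exp_eq_exp_ℂ, NormedSpace.exp_eq_tsum_div]

lemma summable_norm_pow_div_factorial (w : ℂ) :
    Summable fun n : ℕ => ‖w ^ n / (n.factorial : ℂ)‖ := by
  refine (Real.summable_pow_div_factorial ‖w‖).congr fun n => ?_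
  rw [norm_div, norm_pow, Complex.norm_natCast]

lemma circleIntegral_zpow {r : ℝ} (hr : 0 < r) (n : ℤ) :
    (∮ w in C(0, r), w ^ n) = if n = -1 then 2 * (Real.pi : ℂ) * Complex.I else 0 := by
  split_ifs with h
  · subst h
    have := circleIntegral.integral_sub_inv_of_mem_ball (c := (0 : ℂ)) (w := (0 : ℂ))
      (R := r) (by simpa using hr)
    simpa [zpow_neg_one] using this
  · have := circleIntegral.integral_sub_zpow_of_ne h 0 0 r
    simpa using this

lemma integrand_eq (a b : ℝ) (s : ℤ) {w : ℂ} (hw : w ≠ 0) :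
    w ^ s * Complex.exp ((a : ℂ) / w + (b : ℂ) * w)
      = ∑' p : ℕ × ℕ, coef a b p * w ^ (s + (p.2 : ℤ) - (p.1 : ℤ)) := by
  rw [Complex.exp_add, cexp_eq_tsum, cexp_eq_tsum,
    tsum_mul_tsum_of_summable_norm (summable_norm_pow_div_factorial _)
      (summable_norm_pow_div_factorial _), ← tsum_mul_left]
  refine tsum_congr fun p => ?_
  have h1 : w ^ (s + (p.2 : ℤ) - (p.1 : ℤ)) = w ^ s * w ^ p.2 * (w ^ p.1)⁻¹ := by
    rw [← zpow_natCast w p.2, ← zpow_natCast w p.1, ← zpow_neg,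
      show s + (p.2 : ℤ) - (p.1 : ℤ) = s + (p.2 : ℤ) + (-(p.1 : ℤ)) by ring,
      zpow_add₀ hw, zpow_add₀ hw]
  rw [coef, h1]
  have hf1 : (p.1.factorial : ℂ) ≠ 0 := Nat.cast_ne_zero.mpr p.1.factorial_ne_zero
  have hf2 : (p.2.factorial : ℂ) ≠ 0 := Nat.cast_ne_zero.mpr p.2.factorial_ne_zero
  field_simp
  have hwi : w ^ p.1 * w⁻¹ ^ p.1 = 1 := by rw [← mul_pow, mul_inv_cancel₀ hw, one_pow]
  linear_combination ((a : ℂ) ^ p.1 * w ^ p.2 * (b : ℂ) ^ p.2) * hwi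

lemma T_eq_E (a b : ℝ) (x y : ℤ) {r : ℝ} (hr : 0 < r) : T a b x y r = E a b (y - x) := by
  have hne : ∀ θ : ℝ, circleMap 0 r θ ≠ 0 := fun θ => circleMap_ne_center hr.ne'
  set F : ℕ × ℕ → ℝ → ℂ := fun p θ =>
    circleMap 0 r θ * Complex.I *
      (coef a b p * circleMap 0 r θ ^ (x - y - 1 + (p.2 : ℤ) - (p.1 : ℤ))) with hF
  have hFcont : ∀ p, Continuous (F p) := by
    intro p
    exact (((continuous_circleMap 0 r).mul continuous_const).mul (continuous_const.mul
      ((continuous_circleMap 0 r).zpow₀ _ (fun θ => Or.inl (hne θ)))))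
  have hFnorm : ∀ p θ, ‖F p θ‖ = ‖coef a b p‖ * r ^ ((x - y) + (p.2 : ℤ) - (p.1 : ℤ)) := by
    intro p θ
    rw [hF]
    simp only [norm_mul, Complex.norm_I, mul_one, norm_zpow]
    rw [show ‖circleMap 0 r θ‖ = r by
      rw [norm_circleMap_zero, abs_of_pos hr],
      show (x - y) + (p.2 : ℤ) - (p.1 : ℤ) = (x - y - 1 + (p.2 : ℤ) - (p.1 : ℤ)) + 1 by ring,
      zpow_add_one₀ hr.ne']
    ring
  have hμ : (volume.restrict (Set.Ioc (0:ℝ) (2*π))) Set.univ = ENNReal.ofReal (2*π) := by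
    rw [Measure.restrict_apply_univ, Real.volume_Ioc]; norm_num
  have hInt : ∀ p, Integrable (F p) (volume.restrict (Set.Ioc (0:ℝ) (2*π))) := by
    intro p
    exact (hFcont p).integrableOn_Ioc
  have hSum : Summable fun p : ℕ × ℕ =>
      ∫ θ in Set.Ioc (0:ℝ) (2*π), ‖F p θ‖ := by
    have h := (summable_norm_coef_zpow a b hr (x - y)).mul_left (2*π)
    refine h.congr fun p => ?_
    rw [show (fun θ => ‖F p θ‖)
        = fun _ : ℝ => ‖coef a b p‖ * r ^ ((x - y) + (p.2 : ℤ) - (p.1 : ℤ)) from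
      funext fun θ => hFnorm p θ]
    rw [integral_const, measureReal_def, hμ, smul_eq_mul, ENNReal.toReal_ofReal Real.two_pi_pos.le]
  have swap := MeasureTheory.integral_tsum_of_summable_integral_norm hInt hSum
  have key : (∮ w in C(0, r), w ^ (x - y - 1) * Complex.exp ((a:ℂ)/w + (b:ℂ)*w))
      = ∑' p : ℕ × ℕ, coef a b p *
          ∮ w in C(0, r), w ^ (x - y - 1 + (p.2 : ℤ) - (p.1 : ℤ)) := by
    calc (∮ w in C(0, r), w ^ (x - y - 1) * Complex.exp ((a:ℂ)/w + (b:ℂ)*w))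
        = ∫ θ in (0:ℝ)..(2*π), ∑' p : ℕ × ℕ, F p θ := by
          simp only [circleIntegral, deriv_circleMap]
          refine intervalIntegral.integral_congr fun θ _ => ?_
          rw [smul_eq_mul, integrand_eq a b (x - y - 1) (hne θ), ← tsum_mul_left]
      _ = ∑' p : ℕ × ℕ, ∫ θ in Set.Ioc (0:ℝ) (2*π), F p θ := by
          rw [intervalIntegral.integral_of_le Real.two_pi_pos.le, ← swap]
      _ = ∑' p : ℕ × ℕ, coef a b p *
            ∮ w in C(0, r), w ^ (x - y - 1 + (p.2 : ℤ) - (p.1 : ℤ)) := by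
          refine tsum_congr fun p => ?_
          rw [← circleIntegral.integral_const_mul]
          simp only [circleIntegral, deriv_circleMap]
          rw [intervalIntegral.integral_of_le Real.two_pi_pos.le]
          refine MeasureTheory.integral_congr_ae (Filter.Eventually.of_forall fun θ => ?_)
          rw [hF]; simp only [smul_eq_mul]
  rw [T, key]
  have hterm : ∀ p : ℕ × ℕ, coef a b p *
      (∮ w in C(0, r), w ^ (x - y - 1 + (p.2 : ℤ) - (p.1 : ℤ)))
      = (if ((p.2 : ℤ) - (p.1 : ℤ) = y - x) then coef a b p else 0)
          * (2 * (Real.pi : ℂ) * Complex.I) := by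
    intro p
    rw [circleIntegral_zpow hr]
    by_cases hc : ((p.2 : ℤ) - (p.1 : ℤ) = y - x)
    · rw [if_pos hc, if_pos (by omega)]
    · rw [if_neg (by omega), if_neg hc, mul_zero, zero_mul]
  rw [tsum_congr hterm, tsum_mul_right, E]
  have h2πI : (2 * (Real.pi : ℂ) * Complex.I) ≠ 0 := by
    simp [Real.pi_ne_zero, Complex.I_ne_zero, Complex.ofReal_ne_zero]
  field_simp

noncomputable def H (a₁ b₁ a₂ b₂ : ℝ) (x z : ℤ) (u : (ℕ × ℕ) × (ℕ × ℕ)) : ℂ :=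
  if ((u.1.2 : ℤ) - (u.1.1 : ℤ)) + ((u.2.2 : ℤ) - (u.2.1 : ℤ)) = z - x then
    coef a₁ b₁ u.1 * coef a₂ b₂ u.2 else 0

variable (a₁ b₁ a₂ b₂ : ℝ) (x z : ℤ)

lemma summable_norm_H : Summable fun u => ‖H a₁ b₁ a₂ b₂ x z u‖ := by
  refine Summable.of_nonneg_of_le (fun _ => norm_nonneg _) (fun u => ?_)
    ((summable_norm_coef a₁ b₁).mul_of_nonneg (summable_norm_coef a₂ b₂)
      (fun p => norm_nonneg _) (fun p => norm_nonneg _))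
  rw [H]
  split_ifs with h
  · rw [norm_mul]
  · simpa using mul_nonneg (norm_nonneg (coef a₁ b₁ u.1)) (norm_nonneg (coef a₂ b₂ u.2))

lemma summable_H : Summable (H a₁ b₁ a₂ b₂ x z) :=
  (summable_norm_H a₁ b₁ a₂ b₂ x z).of_norm

lemma summable_norm_indCoef (a b : ℝ) (n : ℤ) :
    Summable fun p : ℕ × ℕ => ‖if ((p.2 : ℤ) - (p.1 : ℤ) = n) then coef a b p else 0‖ := by
  refine Summable.of_nonneg_of_le (fun _ => norm_nonneg _) (fun p => ?_)
    (summable_norm_coef a b)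
  split_ifs with h
  · exact le_rfl
  · simpa using norm_nonneg (coef a b p)

lemma fiber_pi1 (y : ℤ) :
    ∑' (u : (fun u : (ℕ × ℕ) × (ℕ × ℕ) =>
        x + ((u.1.2 : ℤ) - (u.1.1 : ℤ))) ⁻¹' {y}), H a₁ b₁ a₂ b₂ x z u
      = E a₁ b₁ (y - x) * E a₂ b₂ (z - y) := by
  classical
  rw [tsum_subtype, E, E,
    tsum_mul_tsum_of_summable_norm (summable_norm_indCoef a₁ b₁ (y - x))
      (summable_norm_indCoef a₂ b₂ (z - y))]
  refine tsum_congr fun u => ?_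
  simp only [Set.indicator_apply, Set.mem_preimage, Set.mem_singleton_iff, H]
  by_cases h1 : ((u.1.2 : ℤ) - (u.1.1 : ℤ) = y - x)
  · by_cases h2 : ((u.2.2 : ℤ) - (u.2.1 : ℤ) = z - y)
    · rw [if_pos (by omega), if_pos (by omega), if_pos h1, if_pos h2]
    · rw [if_pos (by omega), if_neg (by omega), if_pos h1, if_neg h2, mul_zero]
  · rw [if_neg h1, zero_mul]
    split_ifs with h3 h4
    · omega
    · rfl
    · rfl

lemma onedim (u v : ℂ) (j : ℕ) :
    ∑ m ∈ Finset.range (j + 1),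
        u ^ m * v ^ (j - m) / ((m.factorial : ℂ) * ((j - m).factorial : ℂ))
      = (u + v) ^ j / (j.factorial : ℂ) := by
  rw [add_pow, Finset.sum_div]
  refine Finset.sum_congr rfl fun m hm => ?_
  have hmj : m ≤ j := Nat.lt_succ_iff.mp (Finset.mem_range.mp hm)
  rw [Nat.cast_choose ℂ hmj]
  have h1 : (m.factorial : ℂ) ≠ 0 := Nat.cast_ne_zero.mpr m.factorial_ne_zero
  have h2 : ((j - m).factorial : ℂ) ≠ 0 := Nat.cast_ne_zero.mpr (Nat.factorial_ne_zero _)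
  have h3 : (j.factorial : ℂ) ≠ 0 := Nat.cast_ne_zero.mpr j.factorial_ne_zero
  field_simp

lemma fiber_pi2 (jk : ℕ × ℕ) :
    ∑' (u : (fun u : (ℕ × ℕ) × (ℕ × ℕ) =>
        (u.1.1 + u.2.1, u.1.2 + u.2.2)) ⁻¹' {jk}), H a₁ b₁ a₂ b₂ x z u
      = if ((jk.2 : ℤ) - (jk.1 : ℤ) = z - x) then coef (a₁ + a₂) (b₁ + b₂) jk else 0 := by
  classical
  obtain ⟨j, k⟩ := jk
  rw [tsum_subtype]
  by_cases hzx : ((k : ℤ) - (j : ℤ) = z - x)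
  · rw [if_pos hzx]
    classical
    have hvan : ∀ u : (ℕ × ℕ) × (ℕ × ℕ),
        u ∉ (Finset.range (j + 1) ×ˢ Finset.range (k + 1)).image
          (fun mn : ℕ × ℕ => ((mn.1, mn.2), (j - mn.1, k - mn.2))) →
        Set.indicator ((fun u : (ℕ × ℕ) × (ℕ × ℕ) =>
          (u.1.1 + u.2.1, u.1.2 + u.2.2)) ⁻¹' {(j, k)}) (H a₁ b₁ a₂ b₂ x z) u = 0 := by
      intro u hu
      simp only [Set.indicator_apply, Set.mem_preimage, Set.mem_singleton_iff, Prod.mk.injEq]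
      split_ifs with h
      · exfalso
        apply hu
        refine Finset.mem_image.mpr ⟨(u.1.1, u.1.2), ?_, ?_⟩
        · rw [Finset.mem_product]
          constructor <;> rw [Finset.mem_range] <;> omega
        · have h1 : j - u.1.1 = u.2.1 := by omega
          have h2 : k - u.1.2 = u.2.2 := by omega
          simp [h1, h2]
      · rfl
    rw [tsum_eq_sum hvan, Finset.sum_image ?inj]
    case inj =>
      intro mn _ mn' _ h
      simp only [Prod.mk.injEq] at h
      exact Prod.ext h.1.1 h.1.2
    have hterm : ∀ mn ∈ Finset.range (j + 1) ×ˢ Finset.range (k + 1),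
        Set.indicator ((fun u : (ℕ × ℕ) × (ℕ × ℕ) =>
          (u.1.1 + u.2.1, u.1.2 + u.2.2)) ⁻¹' {(j, k)}) (H a₁ b₁ a₂ b₂ x z)
            ((mn.1, mn.2), (j - mn.1, k - mn.2))
          = ((a₁ : ℂ) ^ mn.1 * (a₂ : ℂ) ^ (j - mn.1)
              / ((mn.1.factorial : ℂ) * ((j - mn.1).factorial : ℂ)))
            * ((b₁ : ℂ) ^ mn.2 * (b₂ : ℂ) ^ (k - mn.2)
              / ((mn.2.factorial : ℂ) * ((k - mn.2).factorial : ℂ))) := by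
      intro mn hmn
      rw [Finset.mem_product, Finset.mem_range, Finset.mem_range] at hmn
      have hmem : ((mn.1, mn.2), (j - mn.1, k - mn.2)) ∈
          ((fun u : (ℕ × ℕ) × (ℕ × ℕ) => (u.1.1 + u.2.1, u.1.2 + u.2.2)) ⁻¹' {(j, k)}) := by
        simp only [Set.mem_preimage, Set.mem_singleton_iff, Prod.mk.injEq]
        omega
      rw [Set.indicator_of_mem hmem, H, if_pos (by push_cast; omega), coef, coef]
      ring
    rw [Finset.sum_congr rfl hterm, Finset.sum_product, coef]
    dsimp only
    rw [← Finset.sum_mul_sum, onedim, onedim]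
    push_cast
    ring
  · rw [if_neg hzx]
    have : ∀ u : (ℕ × ℕ) × (ℕ × ℕ),
        Set.indicator ((fun u : (ℕ × ℕ) × (ℕ × ℕ) =>
          (u.1.1 + u.2.1, u.1.2 + u.2.2)) ⁻¹' {(j, k)}) (H a₁ b₁ a₂ b₂ x z) u = 0 := by
      intro u
      simp only [Set.indicator_apply, Set.mem_preimage, Set.mem_singleton_iff, Prod.mk.injEq, H]
      split_ifs with h1 h2
      · exfalso; omega
      · rfl
      · rfl
    simp only [this]
    exact tsum_zero

lemma conv :
    Summable (fun y : ℤ => ‖E a₁ b₁ (y - x) * E a₂ b₂ (z - y)‖) ∧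
    ∑' y : ℤ, E a₁ b₁ (y - x) * E a₂ b₂ (z - y) = E (a₁ + a₂) (b₁ + b₂) (z - x) := by
  have hH := (summable_norm_H a₁ b₁ a₂ b₂ x z).of_norm
  have hB : HasSum (fun y : ℤ => E a₁ b₁ (y - x) * E a₂ b₂ (z - y))
      (∑' u, H a₁ b₁ a₂ b₂ x z u) := by
    have h := hH.hasSum.tsum_fiberwise (fun u : (ℕ × ℕ) × (ℕ × ℕ) =>
      x + ((u.1.2 : ℤ) - (u.1.1 : ℤ)))
    simpa only [fiber_pi1 a₁ b₁ a₂ b₂ x z] using h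
  have hC : HasSum (fun jk : ℕ × ℕ =>
      if ((jk.2 : ℤ) - (jk.1 : ℤ) = z - x) then coef (a₁ + a₂) (b₁ + b₂) jk else 0)
      (∑' u, H a₁ b₁ a₂ b₂ x z u) := by
    have h := hH.hasSum.tsum_fiberwise (fun u : (ℕ × ℕ) × (ℕ × ℕ) =>
      (u.1.1 + u.2.1, u.1.2 + u.2.2))
    simpa only [fiber_pi2 a₁ b₁ a₂ b₂ x z] using h
  constructor
  · have hN := (summable_norm_H a₁ b₁ a₂ b₂ x z).hasSum.tsum_fiberwise
      (fun u : (ℕ × ℕ) × (ℕ × ℕ) => x + ((u.1.2 : ℤ) - (u.1.1 : ℤ)))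
    refine Summable.of_nonneg_of_le (fun _ => norm_nonneg _) (fun y => ?_) hN.summable
    rw [← fiber_pi1 a₁ b₁ a₂ b₂ x z y]
    exact norm_tsum_le_tsum_norm ((summable_norm_H a₁ b₁ a₂ b₂ x z).subtype _)
  · rw [hB.tsum_eq, ← hC.tsum_eq, E]

end Stmt14Aux

/-- semigroup property
`∑_{y∈ℤ} T_{a₁,b₁}(x,y) T_{a₂,b₂}(y,z) = T_{a₁+a₂,b₁+b₂}(x,z)`,
the series converging absolutely. -/
theorem stmt14 (a₁ b₁ a₂ b₂ : ℝ) (x z : ℤ)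
    (r₁ r₂ r₃ : ℝ) (hr₁ : 0 < r₁) (hr₂ : 0 < r₂) (hr₃ : 0 < r₃) :
    Summable (fun y : ℤ => ‖T a₁ b₁ x y r₁ * T a₂ b₂ y z r₂‖) ∧
    ∑' y : ℤ, T a₁ b₁ x y r₁ * T a₂ b₂ y z r₂
      = T (a₁ + a₂) (b₁ + b₂) x z r₃ := by
  have e1 : ∀ y : ℤ, T a₁ b₁ x y r₁ = Stmt14Aux.E a₁ b₁ (y - x) := fun y =>
    Stmt14Aux.T_eq_E a₁ b₁ x y hr₁
  have e2 : ∀ y : ℤ, T a₂ b₂ y z r₂ = Stmt14Aux.E a₂ b₂ (z - y) := fun y =>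
    Stmt14Aux.T_eq_E a₂ b₂ y z hr₂
  have e3 : T (a₁ + a₂) (b₁ + b₂) x z r₃ = Stmt14Aux.E (a₁ + a₂) (b₁ + b₂) (z - x) :=
    Stmt14Aux.T_eq_E (a₁ + a₂) (b₁ + b₂) x z hr₃
  simp only [e1, e2, e3]
  exact Stmt14Aux.conv a₁ b₁ a₂ b₂ x z
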